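/- arXiv:1305.3293 — 4 statements merged into one kernel-verified Lean document; each statement's English description precedes it below -/
import Mathlib

section
/- Let a, β, γ > 0 with β > 2γ and βa > 1. If k ∈ (β, ∞) satisfies (k+β)(k+γ)e^{−ka} = (k−β)(k−γ)e^{ka}, then k < (1 + 41e^{−2βa})β and k² < (1 + 123e^{−2βa})β². -/
open Real Set

set_option maxHeartbeats 1000000 in
theorem stmt1 (a β γ k : ℝ) (ha : 0 < a) (hγ : 0 < γ) (hβγ : β > 2 * γ)
    (hβa : β * a > 1) (hk : k ∈ Ioi β)
    (heq : (k + β) * (k + γ) * Real.exp (-k * a) = (k - β) * (k - γ) * Real.exp (k * a)) :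
    k < (1 + 41 * Real.exp (-2 * β * a)) * β ∧
    k ^ 2 < (1 + 123 * Real.exp (-2 * β * a)) * β ^ 2 := by
  simp only [mem_Ioi] at hk
  have hβ : 0 < β := by linarith
  have hkpos : 0 < k := lt_trans hβ hk
  obtain ⟨u, hu, hupos⟩ : ∃ u, u = Real.exp (-(k * a)) ∧ 0 < u :=
    ⟨_, rfl, Real.exp_pos _⟩
  have huexp : u * Real.exp (k * a) = 1 := by
    rw [hu, ← Real.exp_add]; simp
  have key : (k + β) * (k + γ) * (u * u) = (k - β) * (k - γ) := by
    have h0 : (-k * a) = -(k * a) := by ring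
    calc (k + β) * (k + γ) * (u * u)
        = ((k + β) * (k + γ) * Real.exp (-k * a)) * u := by rw [hu, h0]; ring
      _ = ((k - β) * (k - γ) * Real.exp (k * a)) * u := by rw [heq]
      _ = (k - β) * (k - γ) * (u * Real.exp (k * a)) := by ring
      _ = (k - β) * (k - γ) := by rw [huexp, mul_one]
  -- Lemma A : k - β < 8 * k * (u * u)
  have hA : k - β < 8 * k * (u * u) := by
    have h1 : (k - β) * (k / 2) ≤ (k - β) * (k - γ) :=
      mul_le_mul_of_nonneg_left (by linarith) (by linarith)
    have h2 : (k + β) * (k + γ) * (u * u) < (2 * k) * (2 * k) * (u * u) := by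
      apply mul_lt_mul_of_pos_right _ (mul_pos hupos hupos)
      nlinarith
    have h3 : (k - β) * (k / 2) < (8 * k * (u * u)) * (k / 2) := by
      nlinarith [h1, key, h2]
    exact lt_of_mul_lt_mul_right h3 (by linarith)
  have hka : 1 < k * a := by nlinarith
  -- exp(k*a) ≥ e * (k*a)
  have hexp_lin : Real.exp 1 * (k * a) ≤ Real.exp (k * a) := by
    have h1 : Real.exp (k * a) = Real.exp 1 * Real.exp (k * a - 1) := by
      rw [← Real.exp_add]; ring_nf
    have h2 : (k * a - 1) + 1 ≤ Real.exp (k * a - 1) := Real.add_one_le_exp _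
    calc Real.exp 1 * (k * a) = Real.exp 1 * ((k * a - 1) + 1) := by ring
      _ ≤ Real.exp 1 * Real.exp (k * a - 1) :=
          mul_le_mul_of_nonneg_left h2 (Real.exp_pos 1).le
      _ = Real.exp (k * a) := h1.symm
  have hi : u * (Real.exp 1 * (k * a)) ≤ 1 := by
    calc u * (Real.exp 1 * (k * a)) ≤ u * Real.exp (k * a) :=
          mul_le_mul_of_nonneg_left hexp_lin hupos.le
      _ = 1 := huexp
  have he2 : (2 : ℝ) < Real.exp 1 := by
    have := Real.exp_one_gt_d9; linarith
  -- k < 2 * β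
  have hk2β : k < 2 * β := by
    by_contra hcon
    push_neg at hcon
    have hka2 : 2 < k * a := by nlinarith
    have hu4 : u < 1 / 4 := by
      have h1 : u ≤ Real.exp (-2) := by rw [hu]; exact Real.exp_le_exp.mpr (by linarith)
      have h2 : Real.exp (-2) * Real.exp 2 = 1 := by
        rw [← Real.exp_add]; norm_num
      have h3 : (4 : ℝ) < Real.exp 2 := by
        have : Real.exp 2 = Real.exp 1 * Real.exp 1 := by
          rw [← Real.exp_add]; norm_num
        nlinarith
      have h4 : Real.exp (-2) < 1 / 4 := by
        have hp := Real.exp_pos (-2)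
        nlinarith
      linarith
    -- 8 * k * (u * u) < β, but β ≤ k - β < 8 k u u : contradiction
    have hstep : 8 * u * (u * (Real.exp 1 * (k * a))) ≤ 8 * u := by
      nlinarith [mul_le_mul_of_nonneg_left hi (by positivity : (0:ℝ) ≤ 8 * u)]
    have hβea : 2 < β * (Real.exp 1 * a) := by nlinarith
    have hfin : 8 * k * (u * u) * (Real.exp 1 * a) < β * (Real.exp 1 * a) := by
      have h8u : 8 * u < 2 := by linarith
      calc 8 * k * (u * u) * (Real.exp 1 * a) = 8 * u * (u * (Real.exp 1 * (k * a))) := by ring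
        _ ≤ 8 * u := hstep
        _ < 2 := h8u
        _ < β * (Real.exp 1 * a) := hβea
    have hea : 0 < Real.exp 1 * a := by positivity
    have : 8 * k * (u * u) < β := lt_of_mul_lt_mul_right hfin hea.le
    linarith
  -- main bounds
  obtain ⟨F, hF, hFpos⟩ : ∃ F, F = Real.exp (-2 * β * a) ∧ 0 < F :=
    ⟨_, rfl, Real.exp_pos _⟩
  rw [← hF]
  have huuF : u * u < F := by
    rw [hu, hF, ← Real.exp_add]
    exact Real.exp_lt_exp.mpr (by nlinarith)
  have h16 : k - β < 16 * β * F := by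
    have h1 : 8 * k * (u * u) < 8 * k * F :=
      mul_lt_mul_of_pos_left huuF (by positivity)
    have h2 : 8 * k * F < 8 * (2 * β) * F :=
      mul_lt_mul_of_pos_right (by linarith) hFpos
    linarith
  constructor
  · nlinarith [mul_pos hβ hFpos]
  · have hkβ3 : k + β < 3 * β := by linarith
    have hprod : (k + β) * (k - β) < (k + β) * (16 * β * F) :=
      mul_lt_mul_of_pos_left h16 (by linarith)
    have hprod2 : (k + β) * (16 * β * F) < (3 * β) * (16 * β * F) :=
      mul_lt_mul_of_pos_right hkβ3 (by positivity)
    nlinarith [hprod, hprod2, mul_pos (mul_pos hβ hβ) hFpos]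
end

section
/- For a, β, γ > 0 with β > 2γ and βa > 1, the lowest eigenvalue E(a,β,γ) of the self-adjoint operator on L²(0,a) acting as f ↦ −f'' with boundary conditions f'(0)+βf(0)=0 and f'(a)−γf(a)=0 satisfies β² < −E(a,β,γ) < β² + 123β²e^{−2βa}. -/
open Real Set

lemma keyineq (a β γ k : ℝ) (ha : 0 < a) (hγ : 0 < γ) (hβγ : β > 2*γ)
    (hβa : β * a > 1)
    (hk : β^2 + 123*β^2*Real.exp (-2*β*a) ≤ k^2) (hk0 : 0 ≤ k) :
    (k+β)*(k+γ) < (k-β)*(k-γ)*Real.exp (2*k*a) := by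
  have hβ : 0 < β := by linarith
  have ht : 0 < Real.exp (-2*β*a) := Real.exp_pos _
  have hsq : β^2 < k^2 := by nlinarith [mul_pos (by positivity : (0:ℝ) < 123*β^2) ht]
  have hkβ : β < k := by nlinarith
  set X := Real.exp (2*β*a) with hX
  set Y := Real.exp (2*(k-β)*a) with hY
  have hXpos : 0 < X := Real.exp_pos _
  have hYpos : 0 < Y := Real.exp_pos _
  have hE : Real.exp (2*k*a) = X * Y := by
    rw [hX, hY, ← Real.exp_add]; ring_nf
  have htX : Real.exp (-2*β*a) * X = 1 := by
    rw [hX, ← Real.exp_add]; ring_nf; exact Real.exp_zero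
  have hii : 123*β^2 ≤ (k^2-β^2) * X := by
    have := mul_le_mul_of_nonneg_right (by linarith [hk] : 123*β^2*Real.exp (-2*β*a) ≤ k^2 - β^2) (le_of_lt hXpos)
    calc 123*β^2 = 123*β^2*(Real.exp (-2*β*a) * X) := by rw [htX]; ring
    _ = 123*β^2*Real.exp (-2*β*a) * X := by ring
    _ ≤ (k^2-β^2) * X := this
  have hiii : k^2 ≤ β^2 * Y := by
    have h1 : 1 + (k-β)/β ≤ Real.exp ((k-β)/β) := by
      linarith [Real.add_one_le_exp ((k-β)/β)]
    have h2 : (1:ℝ) + (k-β)/β = k/β := by field_simp; ring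
    have h3 : Real.exp ((k-β)/β) ^ 2 = Real.exp (2*((k-β)/β)) := by
      rw [← Real.exp_nat_mul]; norm_num
    have harg : 2*((k-β)/β) ≤ 2*(k-β)*a := by
      have hd : (k-β)/β ≤ (k-β)*a := by
        rw [div_le_iff₀ hβ]; nlinarith
      linarith
    have h4 : Real.exp (2*((k-β)/β)) ≤ Y := Real.exp_le_exp.mpr harg
    have h5 : (k/β)^2 ≤ Real.exp ((k-β)/β)^2 := by
      apply pow_le_pow_left₀ (by positivity) (by rw [← h2]; exact h1)
    have h6 : (k/β)^2 = k^2/β^2 := by ring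
    have h7 : k^2/β^2 ≤ Y := by rw [← h6]; calc (k/β)^2 ≤ Real.exp ((k-β)/β)^2 := h5
                                 _ = Real.exp (2*((k-β)/β)) := h3
                                 _ ≤ Y := h4
    have := mul_le_mul_of_nonneg_left h7 (le_of_lt (by positivity : (0:ℝ) < β^2))
    calc k^2 = β^2 * (k^2/β^2) := by field_simp
    _ ≤ β^2 * Y := this
  have hXY : 123 * k^2 ≤ (k^2 - β^2) * (X*Y) := by
    have hprod : 123*β^2 * k^2 ≤ ((k^2-β^2)*X) * (β^2*Y) :=
      mul_le_mul hii hiii (by positivity) (by nlinarith)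
    nlinarith [hprod]
  rw [hE]
  have hkpos : 0 < k := lt_trans hβ hkβ
  have hkb : 0 < k + β := by linarith
  have hcub : (k+β)*((k+β)*(k+γ)) < 123*k^2*(k-γ) := by
    nlinarith [mul_nonneg (mul_nonneg (le_of_lt (sub_pos.2 hkβ)) hk0) hk0,
      mul_nonneg (mul_nonneg (by linarith : (0:ℝ) ≤ β-2*γ) hk0) hk0,
      mul_pos hβ hγ, mul_pos hkpos hγ, mul_pos hkpos hβ, mul_pos (mul_pos hkpos hkpos) hkpos]
  have h8 : 123*k^2*(k-γ) ≤ (k^2-β^2)*(X*Y)*(k-γ) :=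
    mul_le_mul_of_nonneg_right hXY (by linarith)
  have : (k+β)*((k+β)*(k+γ)) < (k+β)*((k-β)*(k-γ)*(X*Y)) := by nlinarith [h8, hcub]
  exact lt_of_mul_lt_mul_left this (le_of_lt hkb)

lemma ode_form (a k A B : ℝ) (f : ℝ → ℝ) (hf : ContDiff ℝ 2 f)
    (hode : ∀ x ∈ Icc 0 a, deriv (deriv f) x = k^2 * f x)
    (hA : A + B = f 0) (hB : k*A - k*B = deriv f 0) :
    ∀ x ∈ Icc 0 a, (f x = A * Real.exp (k*x) + B * Real.exp (-(k*x)) ∧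
      deriv f x = k*A * Real.exp (k*x) - k*B * Real.exp (-(k*x))) := by
  have hf' : Differentiable ℝ f := hf.differentiable (by norm_num)
  have hf1 : ContDiff ℝ 1 (deriv f) := by
    have := (contDiff_succ_iff_deriv (n := 1)).mp (by exact_mod_cast hf)
    exact this.2.2
  have hfd : Differentiable ℝ (deriv f) := hf1.differentiable (by norm_num)
  have hcd : Continuous (deriv f) := hfd.continuous
  set g : ℝ → ℝ := fun x => f x - A * Real.exp (k*x) - B * Real.exp (-(k*x)) with hgdef
  set G : ℝ → ℝ := fun x => deriv f x - k*A * Real.exp (k*x) + k*B * Real.exp (-(k*x)) with hGdef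
  have he1 : ∀ x : ℝ, HasDerivAt (fun y => Real.exp (k*y)) (Real.exp (k*x)*k) x := by
    intro x
    have := (((hasDerivAt_id x).const_mul k)).exp
    simpa using this
  have he2 : ∀ x : ℝ, HasDerivAt (fun y => Real.exp (-(k*y))) (Real.exp (-(k*x))*(-k)) x := by
    intro x
    have := ((((hasDerivAt_id x).const_mul k)).neg).exp
    simpa using this
  have hg : ∀ x : ℝ, HasDerivAt g (G x) x := by
    intro x
    have := ((hf' x).hasDerivAt.sub ((he1 x).const_mul A)).sub ((he2 x).const_mul B)
    refine this.congr_deriv ?_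
    simp [hGdef]; ring
  have hG : ∀ x ∈ Icc 0 a, HasDerivAt G (k^2 * g x) x := by
    intro x hx
    have := (((hfd x).hasDerivAt.sub ((he1 x).const_mul (k*A))).add ((he2 x).const_mul (k*B)))
    refine this.congr_deriv ?_
    rw [hode x hx]; simp [hgdef]; ring
  have hgc : Continuous g := by fun_prop
  have hGc : Continuous G := by fun_prop
  set w : ℝ → ℝ := fun x => (G x + k * g x) * Real.exp (-(k*x)) with hwdef
  have hw : ∀ x ∈ Icc 0 a, HasDerivAt w 0 x := by
    intro x hx
    have := ((hG x hx).add ((hg x).const_mul k)).mul (he2 x)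
    refine this.congr_deriv ?_
    simp only [Pi.add_apply]; ring
  have hwc : ContinuousOn w (Icc 0 a) := by fun_prop
  have hw0 : ∀ x ∈ Icc 0 a, w x = w 0 :=
    constant_of_has_deriv_right_zero hwc
      (fun x hx => ((hw x (Ico_subset_Icc_self hx)).hasDerivWithinAt))
  have hg0 : g 0 = 0 := by simp [hgdef]; linarith
  have hG0 : G 0 = 0 := by simp [hGdef]; linarith
  have hGg : ∀ x ∈ Icc 0 a, G x + k * g x = 0 := by
    intro x hx
    have := hw0 x hx
    rw [hwdef] at this
    simp only [hg0, hG0] at this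
    have hne := Real.exp_ne_zero (-(k*x))
    field_simp at this
    simpa using this
  set v : ℝ → ℝ := fun x => g x * Real.exp (k*x) with hvdef
  have hv : ∀ x ∈ Icc 0 a, HasDerivAt v 0 x := by
    intro x hx
    have := (hg x).mul (he1 x)
    have h0 := hGg x hx
    refine this.congr_deriv ?_
    nlinarith [h0, Real.exp_pos (k*x)]
  have hvc : ContinuousOn v (Icc 0 a) := by fun_prop
  have hv0 : ∀ x ∈ Icc 0 a, v x = v 0 :=
    constant_of_has_deriv_right_zero hvc
      (fun x hx => ((hv x (Ico_subset_Icc_self hx)).hasDerivWithinAt))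
  have hgz : ∀ x ∈ Icc 0 a, g x = 0 := by
    intro x hx
    have := hv0 x hx
    rw [hvdef] at this
    simp only [hg0] at this
    have hne := Real.exp_ne_zero (k*x)
    have h2 : g x * Real.exp (k*x) = 0 := by simpa [hgdef] using this
    rcases mul_eq_zero.mp h2 with h | h
    · exact h
    · exact absurd h hne
  intro x hx
  have h1 : g x = 0 := hgz x hx
  have h2 : G x = 0 := by have := hGg x hx; rw [h1] at this; linarith
  constructor
  · have := h1; simp [hgdef] at this; linarith
  · have := h2; simp [hGdef] at this; linarith

lemma expDeriv (c m : ℝ) (x : ℝ) :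
    HasDerivAt (fun y => c * Real.exp (m*y)) (c*m*Real.exp (m*x)) x := by
  have h := (((hasDerivAt_id x).const_mul m)).exp.const_mul c
  refine h.congr_deriv ?_
  simp
  ring

lemma no_low (a β γ E : ℝ) (ha : 0 < a) (hγ : 0 < γ) (hβγ : β > 2*γ)
    (hβa : β * a > 1)
    (hle : E ≤ -(β^2 + 123*β^2*Real.exp (-2*β*a)))
    (f : ℝ → ℝ) (hf : ContDiff ℝ 2 f) (hne : ∃ x ∈ Icc 0 a, f x ≠ 0)
    (hode : ∀ x ∈ Icc 0 a, -(deriv (deriv f) x) = E * f x)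
    (hb0 : deriv f 0 + β * f 0 = 0) (hba : deriv f a - γ * f a = 0) : False := by
  have hβ : 0 < β := by linarith
  have ht : 0 < Real.exp (-2*β*a) := Real.exp_pos _
  have hEneg : 0 < -E := by nlinarith [mul_pos (by positivity : (0:ℝ) < 123*β^2) ht]
  set k := Real.sqrt (-E) with hkdef
  have hk0 : 0 ≤ k := Real.sqrt_nonneg _
  have hk2 : k^2 = -E := Real.sq_sqrt (le_of_lt hEneg)
  have hkk : β^2 + 123*β^2*Real.exp (-2*β*a) ≤ k^2 := by rw [hk2]; linarith
  have hkpos : 0 < k := by nlinarith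
  have hode' : ∀ x ∈ Icc 0 a, deriv (deriv f) x = k^2 * f x := by
    intro x hx
    have := hode x hx
    rw [hk2]; linarith [this]
  have hkne : k ≠ 0 := ne_of_gt hkpos
  set A := (f 0 + deriv f 0 / k)/2 with hAdef
  set B := (f 0 - deriv f 0 / k)/2 with hBdef
  have hA : A + B = f 0 := by rw [hAdef, hBdef]; ring
  have hB : k*A - k*B = deriv f 0 := by
    rw [hAdef, hBdef]; field_simp; ring
  have hform := ode_form a k A B f hf hode' hA hB
  have hmema : a ∈ Icc (0:ℝ) a := Set.mem_Icc.mpr ⟨le_of_lt ha, le_refl a⟩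
  have hfa := (hform a hmema).1
  have hfa' := (hform a hmema).2
  have heq1 : A*(k+β) = B*(k-β) := by linear_combination hb0 + hB + β*hA
  have hBne : B ≠ 0 := by
    intro hB0
    have hA0 : A = 0 := by
      have h0 : A*(k+β) = 0 := by rw [heq1, hB0]; ring
      rcases mul_eq_zero.mp h0 with h | h
      · exact h
      · exfalso; nlinarith
    obtain ⟨x, hx, hfx⟩ := hne
    apply hfx
    rw [(hform x hx).1, hA0, hB0]; ring
  have heq2 : A*(k-γ)*Real.exp (k*a) = B*(k+γ)*Real.exp (-(k*a)) := by
    rw [hfa, hfa'] at hba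
    linear_combination hba
  have hinv : Real.exp (k*a) * Real.exp (-(k*a)) = 1 := by
    rw [← Real.exp_add]; simp
  have heq3 : B*((k-β)*(k-γ)*(Real.exp (k*a)*Real.exp (k*a))) = B*((k+β)*(k+γ)) := by
    linear_combination (k+β)*Real.exp (k*a)*heq2 - (k-γ)*(Real.exp (k*a)*Real.exp (k*a))*heq1
      + B*(k+β)*(k+γ)*hinv
  have heq4 := mul_left_cancel₀ hBne heq3
  have hkey := keyineq a β γ k ha hγ hβγ hβa hkk hk0
  have hsplit : Real.exp (2*k*a) = Real.exp (k*a) * Real.exp (k*a) := by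
    rw [← Real.exp_add]; ring_nf
  rw [hsplit, heq4] at hkey
  exact lt_irrefl _ hkey

theorem stmt2 (a β γ E : ℝ) (ha : 0 < a) (hγ : 0 < γ) (hβγ : β > 2 * γ)
    (hβa : β * a > 1)
    (hE : IsLeast {E : ℝ | ∃ f : ℝ → ℝ, ContDiff ℝ 2 f ∧ (∃ x ∈ Icc 0 a, f x ≠ 0) ∧
      (∀ x ∈ Icc 0 a, -(deriv (deriv f) x) = E * f x) ∧
      deriv f 0 + β * f 0 = 0 ∧ deriv f a - γ * f a = 0} E) :
    β ^ 2 < -E ∧ -E < β ^ 2 + 123 * β ^ 2 * Real.exp (-2 * β * a) := by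
  have hβ : 0 < β := by linarith
  constructor
  · set δ := 123 * β^2 * Real.exp (-2*β*a) with hδdef
    have hδpos : 0 < δ := by positivity
    set K := Real.sqrt (β^2 + δ) with hKdef
    have hK2 : K^2 = β^2 + δ := Real.sq_sqrt (by positivity)
    have hK0 : 0 ≤ K := Real.sqrt_nonneg _
    set φ : ℝ → ℝ := fun k => (k-β)*(k-γ)*Real.exp (2*k*a) - (k+β)*(k+γ) with hφdef
    have hφβ : φ β < 0 := by
      simp only [hφdef]
      have h0 : (β-β)*(β-γ)*Real.exp (2*β*a) = 0 := by ring
      nlinarith [h0, hγ, hβ]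
    have hφK : 0 < φ K := by
      have := keyineq a β γ K ha hγ hβγ hβa (le_of_eq hK2.symm) hK0
      simp only [hφdef]; linarith
    have hβK : β ≤ K := by
      rw [hKdef]
      calc β = Real.sqrt (β^2) := by rw [Real.sqrt_sq (le_of_lt hβ)]
      _ ≤ Real.sqrt (β^2 + δ) := Real.sqrt_le_sqrt (by linarith)
    have hφc : ContinuousOn φ (Icc β K) := by fun_prop
    have hmem : (0:ℝ) ∈ Icc (φ β) (φ K) := ⟨le_of_lt hφβ, le_of_lt hφK⟩
    obtain ⟨k₀, hk₀mem, hφ0⟩ := intermediate_value_Icc hβK hφc hmem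
    have hk₀β : β < k₀ := by
      rcases lt_or_eq_of_le hk₀mem.1 with h | h
      · exact h
      · exfalso; rw [← h] at hφ0; rw [hφ0] at hφβ; exact lt_irrefl _ hφβ
    have hk₀pos : 0 < k₀ := lt_trans hβ hk₀β
    set f₀ : ℝ → ℝ := fun x => (k₀-β) * Real.exp (k₀*x) + (k₀+β) * Real.exp ((-k₀)*x) with hf₀def
    have hd1 : deriv f₀ = fun x => (k₀-β)*k₀*Real.exp (k₀*x) + (k₀+β)*(-k₀)*Real.exp ((-k₀)*x) := by
      funext x
      exact ((expDeriv (k₀-β) k₀ x).add (expDeriv (k₀+β) (-k₀) x)).deriv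
    have hd2 : deriv (deriv f₀) = fun x =>
        (k₀-β)*k₀*k₀*Real.exp (k₀*x) + (k₀+β)*(-k₀)*(-k₀)*Real.exp ((-k₀)*x) := by
      rw [hd1]
      funext x
      exact ((expDeriv ((k₀-β)*k₀) k₀ x).add (expDeriv ((k₀+β)*(-k₀)) (-k₀) x)).deriv
    have hsplit : Real.exp (2*k₀*a) = Real.exp (k₀*a) * Real.exp (k₀*a) := by
      rw [← Real.exp_add]; ring_nf
    have hinv : Real.exp (k₀*a) * Real.exp ((-k₀)*a) = 1 := by
      rw [← Real.exp_add]; simp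
    have hφ0' : (k₀-β)*(k₀-γ)*(Real.exp (k₀*a)*Real.exp (k₀*a)) = (k₀+β)*(k₀+γ) := by
      have h := hφ0
      simp only [hφdef] at h
      linear_combination h - (k₀-β)*(k₀-γ)*hsplit
    have hE₀mem : (-(k₀^2)) ∈ {E : ℝ | ∃ f : ℝ → ℝ, ContDiff ℝ 2 f ∧ (∃ x ∈ Icc 0 a, f x ≠ 0) ∧
        (∀ x ∈ Icc 0 a, -(deriv (deriv f) x) = E * f x) ∧
        deriv f 0 + β * f 0 = 0 ∧ deriv f a - γ * f a = 0} := by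
      refine ⟨f₀, by fun_prop, ⟨0, ⟨le_refl 0, le_of_lt ha⟩, ?_⟩, ?_, ?_, ?_⟩
      · have : f₀ 0 = 2*k₀ := by simp [hf₀def]; ring
        rw [this]
        positivity
      · intro x hx
        rw [hd2]
        simp only [hf₀def]
        ring
      · rw [hd1]
        simp only [hf₀def]
        simp
        ring
      · rw [hd1]
        simp only [hf₀def]
        linear_combination Real.exp ((-k₀)*a) * hφ0' - (k₀-β)*(k₀-γ)*Real.exp (k₀*a) * hinv
    have hle := hE.2 hE₀mem
    have hlt : E < -(β^2) := by nlinarith [hk₀β, hβ, hle]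
    linarith
  · by_contra hcon
    push_neg at hcon
    have hle : E ≤ -(β^2 + 123*β^2*Real.exp (-2*β*a)) := by
      linarith [hcon]
    obtain ⟨f, hf, hne, hode, hb0, hba⟩ := hE.1
    exact no_low a β γ E ha hγ hβγ hβa hle f hf hne hode hb0 hba
end

section
/- Let a, β > 0 with βa > 4/3. If k ∈ (0, β) satisfies log(β+k) − log(β−k) = 2ka and k > √(β² − β/a), then writing k = β − s with s ∈ (0, β/2), one has s < 2βe^{−βa}, and hence k² > β²(1 − 4e^{−βa}). -/
open Real Set

theorem stmt5 (a β k : ℝ) (ha : 0 < a) (hβ : 0 < β) (hβa : β * a > 4 / 3)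
    (hk : k ∈ Ioo 0 β)
    (heq : Real.log (β + k) - Real.log (β - k) = 2 * k * a)
    (hk0 : k > Real.sqrt (β ^ 2 - β / a)) :
    0 < β - k ∧ β - k < β / 2 ∧ β - k < 2 * β * Real.exp (-β * a) ∧
    k ^ 2 > β ^ 2 * (1 - 4 * Real.exp (-β * a)) := by
  obtain ⟨hkpos, hkβ⟩ := hk
  have hbk : 0 < β - k := by linarith
  have hbk2 : 0 < β + k := by linarith
  -- k > β/2
  have hdiv : β / a ≤ 3 * β ^ 2 / 4 := by
    rw [div_le_iff₀ ha]
    nlinarith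
  have hsq : (β / 2) ^ 2 ≤ β ^ 2 - β / a := by nlinarith
  have hhalf : β / 2 < k := by
    have h := (Real.le_sqrt' (by positivity : (0:ℝ) < β / 2)).mpr hsq
    linarith
  -- exponentiate the equation
  have h1 : Real.log ((β + k) / (β - k)) = 2 * k * a := by
    rw [Real.log_div (ne_of_gt hbk2) (ne_of_gt hbk)]; exact heq
  have h2 : (β + k) / (β - k) = Real.exp (2 * k * a) := by
    rw [← h1, Real.exp_log (by positivity)]
  have hepos : (0:ℝ) < Real.exp (2 * k * a) := Real.exp_pos _
  have h3 : β + k = Real.exp (2 * k * a) * (β - k) := by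
    field_simp at h2
    rw [show k * 2 * a = 2 * k * a by ring] at h2
    linarith
  have hsub : β - k = (β + k) * Real.exp (-(2 * k * a)) := by
    rw [Real.exp_neg]
    field_simp
    rw [show k * 2 * a = 2 * k * a by ring]
    linarith [h3]
  -- bound: β - k < 2β e^{-βa}
  have e1 : Real.exp (-(2 * k * a)) < Real.exp (-β * a) := by
    apply Real.exp_lt_exp.mpr
    nlinarith
  have e2 : (0:ℝ) < Real.exp (-(2 * k * a)) := Real.exp_pos _
  have e3 : (0:ℝ) < Real.exp (-β * a) := Real.exp_pos _
  have hmain : β - k < 2 * β * Real.exp (-β * a) := by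
    rw [hsub]
    nlinarith
  -- e^{-βa} < 1/2
  have hE : Real.exp (-β * a) < 1 / 2 := by
    have hlog2 : Real.log 2 < 0.6931471808 := Real.log_two_lt_d9
    have h4 : Real.exp (-Real.log 2) = 1 / 2 := by
      rw [Real.exp_neg, Real.exp_log two_pos]; norm_num
    rw [← h4]
    apply Real.exp_lt_exp.mpr
    nlinarith
  refine ⟨hbk, by linarith, hmain, ?_⟩
  set E := Real.exp (-β * a) with hEdef
  have hkgt : β * (1 - 2 * E) < k := by nlinarith
  have hnn : 0 < β * (1 - 2 * E) := by nlinarith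
  nlinarith [sq_nonneg (β * E), mul_pos hnn hnn]
end

section
/- For a, β > 0 with βa > 4/3, the lowest eigenvalue E(a,β) of the self-adjoint operator on L²(0,a) acting as f ↦ −f'' with boundary conditions f'(0)+βf(0)=0 and f(a)=0 satisfies β² − 4β²e^{−βa} < −E(a,β) < β². -/
open Real Set

lemma constOn {c d : ℝ} (g : ℝ → ℝ) (hcont : ContinuousOn g (Icc c d))
    (h : ∀ x ∈ Icc c d, HasDerivAt g 0 x) : ∀ x ∈ Icc c d, g x = g c :=
  constant_of_has_deriv_right_zero hcont fun x hx =>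
    ((h x (Ico_subset_Icc_self hx)).hasDerivWithinAt)

lemma vanish (a κ β : ℝ) (ha : 0 < a) (hκ : 0 < κ) (hβ : 0 ≤ β) (hβκ : β ≤ κ) (f : ℝ → ℝ)
    (hf : ContDiff ℝ 2 f) (hode : ∀ x ∈ Icc 0 a, deriv (deriv f) x = κ ^ 2 * f x)
    (hb0 : deriv f 0 + β * f 0 = 0) (hba : f a = 0) : ∀ x ∈ Icc 0 a, f x = 0 := by
  have hdf : Differentiable ℝ f := hf.differentiable (by norm_num)
  have hdf' : Differentiable ℝ (deriv f) := by
    have h2 : ContDiff ℝ (1+1) f := by norm_num; exact hf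
    exact ((contDiff_succ_iff_deriv.mp h2).2.2).differentiable (by norm_num)
  have hd1 : ∀ x : ℝ, HasDerivAt f (deriv f x) x := fun x => (hdf x).hasDerivAt
  have hd2 : ∀ x : ℝ, HasDerivAt (deriv f) (deriv (deriv f) x) x := fun x => (hdf' x).hasDerivAt
  set W : ℝ → ℝ := fun x => (deriv f x) ^ 2 - κ ^ 2 * (f x) ^ 2 with hWdef
  have hWc : ∀ x ∈ Icc 0 a, W x = W 0 := by
    apply constOn
    · exact ((hdf'.continuous.pow 2).sub (continuous_const.mul (hdf.continuous.pow 2))).continuousOn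
    · intro x hx
      have h := ((hd2 x).pow 2).sub (((hd1 x).pow 2).const_mul (κ ^ 2))
      convert h using 1
      case e'_9 => rw [hode x hx]; ring
      all_goals rfl
  have hfa' : deriv f a = 0 := by
    have hW := hWc a (by constructor <;> [exact ha.le; rfl])
    have hb : deriv f 0 = -(β * f 0) := by linarith
    have h0 : W 0 ≤ 0 := by
      simp only [hWdef, hb]
      nlinarith [sq_nonneg (f 0), mul_nonneg (mul_nonneg (sub_nonneg.mpr hβκ)
        (by linarith : (0:ℝ) ≤ κ + β)) (sq_nonneg (f 0))]
    have h2 : (deriv f a) ^ 2 ≤ 0 := by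
      have : W a = (deriv f a) ^ 2 := by simp [hWdef, hba]
      nlinarith
    nlinarith [sq_nonneg (deriv f a)]
  have hexp : ∀ (c x : ℝ), HasDerivAt (fun x => Real.exp (c * x)) (c * Real.exp (c * x)) x := by
    intro c x
    have := ((hasDerivAt_id x).const_mul c).exp
    simpa [mul_comm] using this
  set u : ℝ → ℝ := fun x => (deriv f x + κ * f x) * Real.exp (-κ * x) with hudef
  set v : ℝ → ℝ := fun x => (deriv f x - κ * f x) * Real.exp (κ * x) with hvdef
  have huc : ∀ x ∈ Icc 0 a, u x = u 0 := by
    apply constOn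
    · exact ((hdf'.continuous.add (continuous_const.mul hdf.continuous)).mul
        (Real.continuous_exp.comp (continuous_const.mul continuous_id))).continuousOn
    · intro x hx
      have h := ((hd2 x).add ((hd1 x).const_mul κ)).mul (hexp (-κ) x)
      convert h using 1
      case e'_9 => rw [hode x hx, Pi.add_apply]; ring
      all_goals rfl
  have hvc : ∀ x ∈ Icc 0 a, v x = v 0 := by
    apply constOn
    · exact ((hdf'.continuous.sub (continuous_const.mul hdf.continuous)).mul
        (Real.continuous_exp.comp (continuous_const.mul continuous_id))).continuousOn
    · intro x hx
      have h := ((hd2 x).sub ((hd1 x).const_mul κ)).mul (hexp κ x)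
      convert h using 1
      case e'_9 => rw [hode x hx, Pi.sub_apply]; ring
      all_goals rfl
  have hmema : a ∈ Icc (0:ℝ) a := by constructor <;> [exact ha.le; rfl]
  have hua : u a = 0 := by simp [hudef, hba, hfa']
  have hva : v a = 0 := by simp [hvdef, hba, hfa']
  have hu0 : u 0 = 0 := by rw [← huc a hmema, hua]
  have hv0 : v 0 = 0 := by rw [← hvc a hmema, hva]
  intro x hx
  have h1 : u x = 0 := by rw [huc x hx, hu0]
  have h2 : v x = 0 := by rw [hvc x hx, hv0]
  have e1 : deriv f x + κ * f x = 0 := by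
    rcases mul_eq_zero.mp h1 with h | h
    · exact h
    · exact absurd h (Real.exp_ne_zero _)
  have e2 : deriv f x - κ * f x = 0 := by
    rcases mul_eq_zero.mp h2 with h | h
    · exact h
    · exact absurd h (Real.exp_ne_zero _)
  nlinarith

lemma root_exists (a β : ℝ) (ha : 0 < a) (hβ : 0 < β) (hβa : β * a > 4 / 3) :
    ∃ κ : ℝ, β / 2 < κ ∧ κ ≤ β ∧ β * Real.sinh (κ * a) = κ * Real.cosh (κ * a) := by
  set g : ℝ → ℝ := fun κ => β * Real.sinh (κ * a) - κ * Real.cosh (κ * a) with hg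
  have hcont : ContinuousOn g (Icc (β/2) β) := by
    apply Continuous.continuousOn
    continuity
  have hghalf : 0 < g (β/2) := by
    have ht : 4/3 < 2 * (β/2 * a) := by linarith
    have he : (3:ℝ) < Real.exp (2 * (β/2 * a)) := by
      have h1 : Real.exp (4/3) ≤ Real.exp (2 * (β/2*a)) := Real.exp_le_exp.mpr ht.le
      have h2 : Real.exp (4/3 : ℝ) = Real.exp 1 * Real.exp (1/3) := by
        rw [← Real.exp_add]; norm_num
      have h3 := Real.exp_one_gt_d9
      have h4 : (1:ℝ) + 1/3 ≤ Real.exp (1/3) := by linarith [Real.add_one_le_exp (1/3 : ℝ)]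
      nlinarith [Real.exp_pos (1/3 : ℝ)]
    rw [hg]
    simp only
    rw [Real.sinh_eq, Real.cosh_eq]
    have hep := Real.exp_pos (β/2 * a)
    have hen := Real.exp_pos (-(β/2 * a))
    have hprod : Real.exp (β/2*a) * Real.exp (-(β/2*a)) = 1 := by
      rw [← Real.exp_add]; norm_num
    nlinarith [he, Real.exp_pos (2 * (β/2*a)), (by rw [← Real.exp_add]; ring_nf :
      Real.exp (β/2*a) * Real.exp (β/2*a) = Real.exp (2*(β/2*a)))]
  have hgβ : g β < 0 := by
    rw [hg]
    simp only
    rw [Real.sinh_eq, Real.cosh_eq]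
    have := Real.exp_pos (-(β * a))
    nlinarith
  have h0mem : (0:ℝ) ∈ Icc (g β) (g (β/2)) := ⟨hgβ.le, hghalf.le⟩
  obtain ⟨κ, hκmem, hκ0⟩ := intermediate_value_Icc' (by linarith : β/2 ≤ β) hcont h0mem
  simp only [hg] at hκ0
  refine ⟨κ, ?_, hκmem.2, by linarith [hκ0]⟩
  rcases lt_or_eq_of_le hκmem.1 with h | h
  · exact h
  · exfalso; rw [← h] at hκ0; simp only [hg] at hghalf; linarith

theorem stmt6 (a β E : ℝ) (ha : 0 < a) (hβ : 0 < β) (hβa : β * a > 4 / 3)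
    (hE : IsLeast {E : ℝ | ∃ f : ℝ → ℝ, ContDiff ℝ 2 f ∧ (∃ x ∈ Icc 0 a, f x ≠ 0) ∧
      (∀ x ∈ Icc 0 a, -(deriv (deriv f) x) = E * f x) ∧
      deriv f 0 + β * f 0 = 0 ∧ f a = 0} E) :
    β ^ 2 - 4 * β ^ 2 * Real.exp (-β * a) < -E ∧ -E < β ^ 2 := by
  -- Part 2: -E < β^2
  have part2 : -E < β ^ 2 := by
    by_contra hcon
    push_neg at hcon
    set κ := Real.sqrt (-E) with hκdef
    have hEneg : 0 < -E := lt_of_lt_of_le (by positivity) hcon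
    have hκ2 : κ ^ 2 = -E := Real.sq_sqrt hEneg.le
    have hβκ : β ≤ κ := by
      have := Real.sqrt_le_sqrt hcon
      rwa [Real.sqrt_sq hβ.le] at this
    have hκpos : 0 < κ := lt_of_lt_of_le hβ hβκ
    obtain ⟨f, hf, ⟨x, hx, hfx⟩, hode, hb0, hba⟩ := hE.1
    have hode' : ∀ y ∈ Icc 0 a, deriv (deriv f) y = κ ^ 2 * f y := by
      intro y hy
      have := hode y hy
      rw [hκ2]
      linarith
    exact hfx (vanish a κ β ha hκpos hβ.le hβκ f hf hode' hb0 hba x hx)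
  refine ⟨?_, part2⟩
  -- Part 1: construct eigenfunction
  obtain ⟨κ, hκhalf, hκβ, hroot⟩ := root_exists a β ha hβ hβa
  have hκpos : 0 < κ := by linarith
  set f : ℝ → ℝ := fun x => Real.sinh (κ * (a - x)) with hfdef
  have hinner : ∀ x : ℝ, HasDerivAt (fun x => κ * (a - x)) (-κ) x := by
    intro x
    have := ((hasDerivAt_id x).const_sub a).const_mul κ
    simpa using this
  have hdf : ∀ x : ℝ, HasDerivAt f (Real.cosh (κ * (a - x)) * -κ) x := fun x => (hinner x).sinh
  have D1 : deriv f = fun x => Real.cosh (κ * (a - x)) * -κ := funext fun x => (hdf x).deriv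
  have D2 : ∀ x : ℝ, deriv (deriv f) x = κ ^ 2 * f x := by
    intro x
    rw [D1]
    have h := (((hinner x).cosh).mul_const (-κ)).deriv
    rw [h, hfdef]
    ring
  have hC2 : ContDiff ℝ 2 f := (contDiff_const.mul (contDiff_const.sub contDiff_id)).sinh
  have hmem : -κ ^ 2 ∈ {E : ℝ | ∃ f : ℝ → ℝ, ContDiff ℝ 2 f ∧ (∃ x ∈ Icc 0 a, f x ≠ 0) ∧
      (∀ x ∈ Icc 0 a, -(deriv (deriv f) x) = E * f x) ∧
      deriv f 0 + β * f 0 = 0 ∧ f a = 0} := by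
    refine ⟨f, hC2, ⟨0, ⟨le_refl 0, ha.le⟩, ?_⟩, ?_, ?_, ?_⟩
    · simp only [hfdef, sub_zero]
      exact ne_of_gt (Real.sinh_pos_iff.mpr (by positivity))
    · intro x _
      rw [D2 x]; ring
    · rw [D1]
      simp only [hfdef, sub_zero]
      linarith
    · simp [hfdef]
  have hEle : E ≤ -κ ^ 2 := hE.2 hmem
  -- final inequality
  set t := Real.exp (κ * a) with htdef
  set s := Real.exp (-(κ * a)) with hsdef
  have hts : t * s = 1 := by rw [htdef, hsdef, ← Real.exp_add]; norm_num
  have htpos : 0 < t := Real.exp_pos _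
  have hspos : 0 < s := Real.exp_pos _
  have hq : κ * (t ^ 2 + 1) = β * (t ^ 2 - 1) := by
    rw [Real.sinh_eq, Real.cosh_eq] at hroot
    have hsinv : Real.exp (-(κ * a)) = s := rfl
    have e2 : t * t = t ^ 2 := by ring
    nlinarith [hroot, hts]
  have hq2 : κ * (t + s) = β * (t - s) := by
    linear_combination s * hq - (κ - β) * t * hts
  have hr : s * s < Real.exp (-β * a) := by
    have h1 : Real.exp (-(κ*a) + -(κ*a)) < Real.exp (-β * a) :=
      Real.exp_lt_exp.mpr (by nlinarith)
    rw [Real.exp_add] at h1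
    exact h1
  have e : κ ^ 2 * (t + s) ^ 2 = β ^ 2 * (t - s) ^ 2 := by
    linear_combination (κ * (t + s) + β * (t - s)) * hq2
  have id1 : β ^ 2 * (t - s) ^ 2 =
      (β ^ 2 - 4 * β ^ 2 * (s * s)) * (t + s) ^ 2 + 8 * β ^ 2 * s ^ 2 + 4 * β ^ 2 * s ^ 4 := by
    linear_combination (4 * β ^ 2 * (t * s - 1) + 4 * β ^ 2 + 8 * β ^ 2 * s ^ 2) * hts
  have key : β ^ 2 - 4 * β ^ 2 * (s * s) < κ ^ 2 := by
    nlinarith [e, id1, sq_nonneg (t + s),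
      mul_pos (mul_pos hβ hβ) (mul_pos hspos hspos)]
  nlinarith [key, hr, hEle, mul_pos hβ hβ]
end
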